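/- The set L₁ = {t ∈ {a,b,c}^({L,R}*) : every infinite branch of t contains at least one occurrence of a} has coin-flipping measure 1/2. -/
import Mathlib


open MeasureTheory Filter Topology

/-- The alphabet {a,b,c}, with `0` playing the role of the letter `a`. -/
abbrev Letter := Fin 3

/-- The prefix of length `n` of an infinite branch `b : ℕ → Bool`. -/
def branchPrefix (b : ℕ → Bool) (n : ℕ) : List Bool := List.ofFn (fun i : Fin n => b i)

/-- The set of trees having at least one occurrence of `a` on every branch. -/
def L1 : Set (List Bool → Letter) :=
  {t | ∀ b : ℕ → Bool, ∃ n : ℕ, t (branchPrefix b n) = 0}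

namespace Stmt13Aux

/-- nodes of depth ≤ n -/
def S (n : ℕ) : Finset (List Bool) :=
  (Finset.range (n+1)).biUnion fun k =>
    (Finset.univ : Finset (Fin k → Bool)).map ⟨List.ofFn, List.ofFn_injective⟩

lemma mem_S {n : ℕ} {v : List Bool} : v ∈ S n ↔ v.length ≤ n := by
  simp only [S, Finset.mem_biUnion, Finset.mem_range, Finset.mem_map, Finset.mem_univ, true_and,
    Function.Embedding.coeFn_mk]
  constructor
  · rintro ⟨k, hk, f, rfl⟩
    simpa using Nat.lt_succ_iff.mp hk
  · intro h
    exact ⟨v.length, Nat.lt_succ_of_le h, fun i => v.get i, by simp⟩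

def ext (s : Finset (List Bool)) (g : ↥s → Letter) : List Bool → Letter :=
  fun v => if h : v ∈ s then g ⟨v, h⟩ else 0

lemma ext_apply {s : Finset (List Bool)} (g : ↥s → Letter) {v : List Bool} (h : v ∈ s) :
    ext s g v = g ⟨v, h⟩ := dif_pos h

open scoped Classical in
lemma measure_det {μ : Measure (List Bool → Letter)}
    (hμ : ∀ (s : Finset (List Bool)) (f : List Bool → Letter),
      μ {t | ∀ v ∈ s, t v = f v} = (1/3 : ENNReal) ^ s.card)
    (s : Finset (List Bool)) (Q : Set (List Bool → Letter))
    (hQ : ∀ t t', (∀ v ∈ s, t v = t' v) → t ∈ Q → t' ∈ Q) :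
    μ Q = ((Finset.univ.filter fun g : ↥s → Letter => ext s g ∈ Q).card : ENNReal)
      * (1/3 : ENNReal) ^ s.card := by
  have hdecomp : Q = ⋃ g ∈ (Finset.univ.filter fun g : ↥s → Letter => ext s g ∈ Q),
      {t | ∀ v ∈ s, t v = ext s g v} := by
    ext t
    simp only [Set.mem_iUnion, Finset.mem_filter, Finset.mem_univ, true_and, Set.mem_setOf_eq]
    constructor
    · intro ht
      refine ⟨fun v => t v.1, hQ t _ (fun v hv => by rw [ext_apply _ hv]) ht, fun v hv => by rw [ext_apply _ hv]⟩
    · rintro ⟨g, hg, hagree⟩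
      exact hQ (ext s g) t (fun v hv => (hagree v hv).symm) hg
  conv_lhs => rw [hdecomp]
  rw [measure_biUnion_finset]
  · simp only [hμ]
    rw [Finset.sum_const, nsmul_eq_mul]
  · intro g hg g' hg' hne
    simp only [Function.onFun, Set.disjoint_left]
    intro t ht ht'
    apply hne
    funext v
    have h1 := ht v.1 v.2
    have h2 := ht' v.1 v.2
    rw [ext_apply _ v.2] at h1 h2
    rw [← h1, ← h2]
  · intro g hg
    have : {t : List Bool → Letter | ∀ v ∈ s, t v = ext s g v}
        = ⋂ v ∈ s, (fun t : List Bool → Letter => t v) ⁻¹' {ext s g v} := by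
      ext t; simp
    rw [this]
    exact MeasurableSet.biInter s.countable_toSet
      (fun v _ => measurable_pi_apply v (measurableSet_singleton _))


def B (n : ℕ) : Set (List Bool → Letter) :=
  {t | ∀ b : ℕ → Bool, ∃ k ≤ n, t (branchPrefix b k) = 0}

@[simp] lemma length_branchPrefix {b : ℕ → Bool} {k : ℕ} : (branchPrefix b k).length = k := by
  simp [branchPrefix]

@[simp] lemma branchPrefix_zero {b : ℕ → Bool} : branchPrefix b 0 = [] := by
  simp [branchPrefix]

lemma branchPrefix_succ (b : ℕ → Bool) (k : ℕ) :
    branchPrefix b (k+1) = b 0 :: branchPrefix (fun i => b (i+1)) k := by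
  simp [branchPrefix, List.ofFn_succ]

/-- prepend a step to a branch -/
def consB (d : Bool) (b : ℕ → Bool) : ℕ → Bool := fun i => Nat.casesOn i d b

lemma branchPrefix_consB (d : Bool) (b : ℕ → Bool) (k : ℕ) :
    branchPrefix (consB d b) (k+1) = d :: branchPrefix b k := by
  rw [branchPrefix_succ]; rfl

lemma B_mono : Monotone B := by
  intro n m hnm t ht b
  obtain ⟨k, hk, h⟩ := ht b
  exact ⟨k, hk.trans hnm, h⟩

lemma mem_B_succ {t : List Bool → Letter} {n : ℕ} :
    t ∈ B (n+1) ↔ t [] = 0 ∨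
      ((fun v => t (false :: v)) ∈ B n ∧ (fun v => t (true :: v)) ∈ B n) := by
  constructor
  · intro ht
    by_cases h0 : t [] = 0
    · exact Or.inl h0
    · refine Or.inr ⟨?_, ?_⟩ <;> intro b
      · obtain ⟨k, hk, h⟩ := ht (consB false b)
        match k, hk with
        | 0, _ => simp at h; exact absurd h h0
        | (j+1), hj =>
          rw [branchPrefix_consB] at h
          exact ⟨j, Nat.succ_le_succ_iff.mp hj, h⟩
      · obtain ⟨k, hk, h⟩ := ht (consB true b)
        match k, hk with
        | 0, _ => simp at h; exact absurd h h0
        | (j+1), hj =>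
          rw [branchPrefix_consB] at h
          exact ⟨j, Nat.succ_le_succ_iff.mp hj, h⟩
  · rintro (h0 | ⟨hL, hR⟩) b
    · exact ⟨0, Nat.zero_le _, by simpa using h0⟩
    · rcases hb0 : b 0 with _ | _
      · obtain ⟨j, hj, h⟩ := hL (fun i => b (i+1))
        refine ⟨j+1, Nat.succ_le_succ hj, ?_⟩
        rw [branchPrefix_succ, hb0]; exact h
      · obtain ⟨j, hj, h⟩ := hR (fun i => b (i+1))
        refine ⟨j+1, Nat.succ_le_succ hj, ?_⟩
        rw [branchPrefix_succ, hb0]; exact h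

lemma mem_B_zero {t : List Bool → Letter} : t ∈ B 0 ↔ t [] = 0 := by
  constructor
  · intro ht
    obtain ⟨k, hk, h⟩ := ht (fun _ => false)
    interval_cases k
    simpa using h
  · intro h b; exact ⟨0, le_rfl, by simpa using h⟩

lemma L1_eq : L1 = ⋃ n, B n := by
  ext t
  simp only [Set.mem_iUnion]
  constructor
  · intro ht
    by_contra hc
    push_neg at hc
    simp only [B, Set.mem_setOf_eq, not_forall, not_exists, not_and] at hc
    have hc' : ∀ n, ∃ b : ℕ → Bool, ∀ k ≤ n, t (branchPrefix b k) ≠ 0 := by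
      intro n
      obtain ⟨b, hb⟩ := hc n
      exact ⟨b, fun k hk => hb k hk⟩
    set C : ℕ → Set (ℕ → Bool) := fun n => {b | ∀ k ≤ n, t (branchPrefix b k) ≠ 0} with hC
    have hsub : ∀ i, C (i+1) ⊆ C i := fun i b hb k hk => hb k (hk.trans (Nat.le_succ i))
    have hne : ∀ i, (C i).Nonempty := fun i => hc' i
    have hclosed : ∀ i, IsClosed (C i) := by
      intro i
      have : C i = ⋂ (k : ℕ) (_ : k ≤ i),
          (fun b : ℕ → Bool => t (branchPrefix b k)) ⁻¹' ({0}ᶜ) := by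
        ext b; simp [hC]
      rw [this]
      refine isClosed_iInter fun k => isClosed_iInter fun _ => IsClosed.preimage ?_ ?_
      · have : (fun b : ℕ → Bool => t (branchPrefix b k))
            = (fun v : Fin k → Bool => t (List.ofFn v)) ∘ (fun b i => b i) := rfl
        rw [this]
        exact (continuous_of_discreteTopology).comp
          (continuous_pi fun i => continuous_apply (i : ℕ))
      · exact (isOpen_discrete _).isClosed_compl
    obtain ⟨b, hb⟩ := IsCompact.nonempty_iInter_of_sequence_nonempty_isCompact_isClosed
      C hsub hne ((hclosed 0).isCompact) hclosed
    obtain ⟨k, hk⟩ := ht b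
    exact (Set.mem_iInter.mp hb k) k le_rfl hk
  · rintro ⟨n, hn⟩ b
    obtain ⟨k, _, h⟩ := hn b
    exact ⟨k, h⟩


lemma nil_mem_S {n : ℕ} : ([] : List Bool) ∈ S n := mem_S.mpr (by simp)
lemma cons_mem_S {n : ℕ} {d : Bool} {w : List Bool} (h : w ∈ S n) : (d :: w) ∈ S (n+1) :=
  mem_S.mpr (by simpa using Nat.succ_le_succ (mem_S.mp h))
lemma mem_S_tail {n : ℕ} {d : Bool} {w : List Bool} (h : (d :: w) ∈ S (n+1)) : w ∈ S n :=
  mem_S.mpr (Nat.succ_le_succ_iff.mp (by simpa using mem_S.mp h))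
def E (n : ℕ) : (↥(S (n+1)) → Letter) ≃ Letter × (↥(S n) → Letter) × (↥(S n) → Letter) where
  toFun g := (g ⟨[], nil_mem_S⟩, fun v => g ⟨false :: v.1, cons_mem_S v.2⟩,
      fun v => g ⟨true :: v.1, cons_mem_S v.2⟩)
  invFun x v :=
    match v with
    | ⟨[], _⟩ => x.1
    | ⟨false :: w, h⟩ => x.2.1 ⟨w, mem_S_tail h⟩
    | ⟨true :: w, h⟩ => x.2.2 ⟨w, mem_S_tail h⟩
  left_inv g := by
    funext v
    rcases v with ⟨v, hv⟩
    match v with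
    | [] => rfl
    | false :: w => rfl
    | true :: w => rfl
  right_inv x := by rcases x with ⟨a, gl, gr⟩; rfl

-- NEW MATERIAL BELOW

lemma B_det {n : ℕ} {t t' : List Bool → Letter} (h : ∀ v ∈ S n, t v = t' v) :
    t ∈ B n → t' ∈ B n := by
  intro ht b
  obtain ⟨k, hk, hv⟩ := ht b
  exact ⟨k, hk, by rw [← h _ (mem_S.mpr (by simpa using hk))]; exact hv⟩

lemma B_congr {n : ℕ} {t t' : List Bool → Letter} (h : ∀ v ∈ S n, t v = t' v) :
    t ∈ B n ↔ t' ∈ B n := ⟨B_det h, B_det (fun v hv => (h v hv).symm)⟩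

lemma good_iff (n : ℕ) (g : ↥(S (n+1)) → Letter) :
    ext (S (n+1)) g ∈ B (n+1) ↔ (E n g).1 = 0 ∨
      (ext (S n) (E n g).2.1 ∈ B n ∧ ext (S n) (E n g).2.2 ∈ B n) := by
  rw [mem_B_succ]
  have h0 : ext (S (n+1)) g [] = (E n g).1 := ext_apply _ nil_mem_S
  have hL : ((fun v => ext (S (n+1)) g (false :: v)) ∈ B n) ↔ ext (S n) (E n g).2.1 ∈ B n := by
    refine B_congr fun v hv => ?_
    rw [ext_apply _ (cons_mem_S hv), ext_apply _ hv]
    rfl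
  have hR : ((fun v => ext (S (n+1)) g (true :: v)) ∈ B n) ↔ ext (S n) (E n g).2.2 ∈ B n := by
    refine B_congr fun v hv => ?_
    rw [ext_apply _ (cons_mem_S hv), ext_apply _ hv]
    rfl
  rw [h0, hL, hR]

open scoped Classical in
noncomputable def N (n : ℕ) : ℕ :=
  (Finset.univ.filter fun g : ↥(S n) → Letter => ext (S n) g ∈ B n).card

lemma card_S_succ (n : ℕ) : (S (n+1)).card = 2 * (S n).card + 1 := by
  have h := Fintype.card_congr (E n)
  simp only [Fintype.card_fun, Fintype.card_coe, Fintype.card_prod, Fintype.card_fin] at h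
  refine Nat.pow_right_injective (by norm_num : 2 ≤ 3) ?_
  show (3:ℕ) ^ (S (n+1)).card = 3 ^ (2 * (S n).card + 1)
  rw [h]
  ring

lemma count_or {β : Type*} [Fintype β] (Q : β → Prop) [DecidablePred Q] :
    (Finset.univ.filter fun x : Fin 3 × β => x.1 = 0 ∨ Q x.2).card
      = Fintype.card β + 2 * (Finset.univ.filter Q).card := by
  rw [Finset.card_filter, Fintype.sum_prod_type, Fin.sum_univ_three, Finset.card_filter]
  have h0 : (∑ y : β, if (0 : Fin 3) = 0 ∨ Q y then (1:ℕ) else 0) = Fintype.card β := by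
    simp [Finset.card_univ]
  have h1 : (∑ y : β, if (1 : Fin 3) = 0 ∨ Q y then (1:ℕ) else 0)
      = ∑ y : β, if Q y then (1:ℕ) else 0 :=
    Finset.sum_congr rfl fun y _ => if_congr (or_iff_right (by decide)) rfl rfl
  have h2 : (∑ y : β, if (2 : Fin 3) = 0 ∨ Q y then (1:ℕ) else 0)
      = ∑ y : β, if Q y then (1:ℕ) else 0 :=
    Finset.sum_congr rfl fun y _ => if_congr (or_iff_right (by decide)) rfl rfl
  rw [h0, h1, h2]
  ring

lemma count_and {β γ : Type*} [Fintype β] [Fintype γ] (Qb : β → Prop) (Qc : γ → Prop)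
    [DecidablePred Qb] [DecidablePred Qc] :
    (Finset.univ.filter fun y : β × γ => Qb y.1 ∧ Qc y.2).card
      = (Finset.univ.filter Qb).card * (Finset.univ.filter Qc).card := by
  classical
  rw [← Finset.univ_product_univ, Finset.filter_product, Finset.card_product]

lemma N_succ (n : ℕ) : N (n+1) = 3 ^ (2 * (S n).card) + 2 * N n ^ 2 := by
  classical
  have hN : ∀ m, N m = (Finset.univ.filter fun g : ↥(S m) → Letter => ext (S m) g ∈ B m).card := by
    intro m; rw [N]
  have hcard : N (n+1)
      = (Finset.univ.filter fun x : Letter × (↥(S n) → Letter) × (↥(S n) → Letter) =>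
        x.1 = 0 ∨ (ext (S n) x.2.1 ∈ B n ∧ ext (S n) x.2.2 ∈ B n)).card := by
    rw [hN]
    refine Finset.card_bij (fun g _ => E n g) ?_ ?_ ?_
    · intro g hg
      rw [Finset.mem_filter] at hg
      rw [Finset.mem_filter]
      exact ⟨Finset.mem_univ _, (good_iff n g).mp hg.2⟩
    · intro g _ g' _ h
      exact (E n).injective h
    · intro x hx
      refine ⟨(E n).symm x, ?_, ((E n).apply_symm_apply x).symm⟩
      rw [Finset.mem_filter] at hx
      rw [Finset.mem_filter]
      refine ⟨Finset.mem_univ _, ?_⟩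
      rw [good_iff, (E n).apply_symm_apply]
      exact hx.2
  rw [hcard, count_or (fun y : (↥(S n) → Letter) × (↥(S n) → Letter) => ext (S n) y.1 ∈ B n ∧ ext (S n) y.2 ∈ B n),
    count_and (fun h : ↥(S n) → Letter => ext (S n) h ∈ B n) (fun h : ↥(S n) → Letter => ext (S n) h ∈ B n), Fintype.card_prod, Fintype.card_fun, Fintype.card_coe,
    Fintype.card_fin, ← hN]
  ring




open scoped Classical in
lemma measure_B {μ : Measure (List Bool → Letter)}
    (hμ : ∀ (s : Finset (List Bool)) (f : List Bool → Letter),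
      μ {t | ∀ v ∈ s, t v = f v} = (1/3 : ENNReal) ^ s.card) (n : ℕ) :
    μ (B n) = (N n : ENNReal) * (1/3 : ENNReal) ^ (S n).card := by
  rw [measure_det hμ (S n) (B n) (fun t t' h => B_det h), N]

/-- the real-valued measure sequence -/
noncomputable def q (n : ℕ) : ℝ := (N n : ℝ) * (1/3 : ℝ) ^ (S n).card

lemma q_nonneg (n : ℕ) : 0 ≤ q n := by unfold q; positivity

lemma ofReal_third : (1/3 : ENNReal) = ENNReal.ofReal (1/3 : ℝ) := by
  rw [ENNReal.ofReal_div_of_pos (by norm_num)]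
  norm_num

lemma measure_B' {μ : Measure (List Bool → Letter)}
    (hμ : ∀ (s : Finset (List Bool)) (f : List Bool → Letter),
      μ {t | ∀ v ∈ s, t v = f v} = (1/3 : ENNReal) ^ s.card) (n : ℕ) :
    μ (B n) = ENNReal.ofReal (q n) := by
  rw [measure_B hμ n, q, ENNReal.ofReal_mul (by positivity), ENNReal.ofReal_pow (by norm_num),
    ENNReal.ofReal_natCast, ofReal_third]

lemma q_succ (n : ℕ) : q (n+1) = 1/3 + 2/3 * q n ^ 2 := by
  unfold q
  rw [N_succ, card_S_succ]
  have h3 : (3:ℝ)^(2*(S n).card) * ((1/3 : ℝ)^(S n).card)^2 = 1 := by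
    have h4 : ((1/3:ℝ)^(S n).card)^2 = (1/3:ℝ)^(2*(S n).card) := by
      rw [← pow_mul, mul_comm]
    rw [h4, ← mul_pow]
    norm_num
  push_cast
  linear_combination (1/3 : ℝ) * h3

lemma q_bounds (h0 : q 0 = 1/3) (n : ℕ) :
    0 ≤ 1/2 - q n ∧ 1/2 - q n ≤ (1/6) * (2/3)^n := by
  induction n with
  | zero => rw [h0]; norm_num
  | succ n ih =>
    obtain ⟨h1, h2⟩ := ih
    have hp : (0:ℝ) ≤ (2/3:ℝ)^n := by positivity
    have hle : (1/6:ℝ) * (2/3)^n ≤ 1/6 := by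
      have : (2/3:ℝ)^n ≤ 1 := pow_le_one₀ (by norm_num) (by norm_num)
      nlinarith
    have hq0 := q_nonneg n
    constructor
    · rw [q_succ]; nlinarith
    · rw [q_succ, pow_succ (2/3 : ℝ) n]
      nlinarith [sq_nonneg (1/2 - q n)]

end Stmt13Aux

open Stmt13Aux in
/-- If `μ` is the coin-flipping measure, i.e. a probability measure under which the labels
of the vertices are independent and uniform over the three letters (equivalently, every
cylinder prescribing the labels of `k` distinct vertices has measure `(1/3)^k`), then
`μ L1 = 1/2`. -/
theorem stmt_13 (μ : Measure (List Bool → Letter)) [IsProbabilityMeasure μ]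
    (hμ : ∀ (s : Finset (List Bool)) (f : List Bool → Letter),
      μ {t | ∀ v ∈ s, t v = f v} = (1/3 : ENNReal) ^ s.card) :
    μ L1 = 1/2 := by
  have h0 : q 0 = 1/3 := by
    have hB0 : μ (B 0) = (1/3 : ENNReal) := by
      have hset : B 0 = {t : List Bool → Letter |
          ∀ v ∈ ({[]} : Finset (List Bool)), t v = (fun _ => (0 : Letter)) v} := by
        ext t
        simp [mem_B_zero]
      rw [hset, hμ]
      simp
    rw [measure_B' hμ 0, ofReal_third] at hB0
    rw [← ENNReal.ofReal_eq_ofReal_iff (q_nonneg 0) (by norm_num)]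
    exact hB0
  have hq : Tendsto q atTop (𝓝 (1/2 : ℝ)) := by
    have h := tendsto_pow_atTop_nhds_zero_of_lt_one (by norm_num : (0:ℝ) ≤ 2/3) (by norm_num)
    have h' : Tendsto (fun n => (1/6:ℝ) * (2/3)^n) atTop (𝓝 0) := by
      simpa using h.const_mul (1/6 : ℝ)
    have hsq : Tendsto (fun n => 1/2 - q n) atTop (𝓝 0) :=
      squeeze_zero (fun n => (q_bounds h0 n).1) (fun n => (q_bounds h0 n).2) h'
    have := (tendsto_const_nhds (x := (1/2:ℝ)) (f := atTop)).sub hsq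
    simpa using this
  have h1 : Tendsto (fun n => μ (B n)) atTop (𝓝 (μ L1)) := by
    rw [L1_eq]
    exact tendsto_measure_iUnion_atTop B_mono
  have h2 : Tendsto (fun n => μ (B n)) atTop (𝓝 (ENNReal.ofReal (1/2 : ℝ))) := by
    simp_rw [measure_B' hμ]
    exact (ENNReal.continuous_ofReal.tendsto _).comp hq
  rw [tendsto_nhds_unique h1 h2]
  rw [ENNReal.ofReal_div_of_pos (by norm_num)]
  norm_num
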